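/- In the ring of formal power series in q over the polynomial ring ℚ[z], the identity ∑_{n=1}^∞ z^n q^{n²} · (zq^{n+1};q)_∞ · ((q;q)_{n−1})^{−1} · (1+q^n)^{−1} = ∑_{n=1}^∞ (−1)^{n−1} z^n q^{n(n+1)/2} · (∏_{j=1}^{n} (1+q^j))^{−1} holds. -/

import Mathlib

open PowerSeries

/-- The coefficientwise sum of a family of formal power series; it agrees with
the sum of the family whenever `coeff N (f n) = 0` for `n > N` (so that the
partial sums converge coefficientwise in the `q`-adic topology). -/
noncomputable def seriesSum {R : Type*} [CommRing R] (f : ℕ → PowerSeries R) : PowerSeries R :=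
  PowerSeries.mk fun N => ∑ n ∈ Finset.range (N + 1), PowerSeries.coeff (R := R) N (f n)

/-- The coefficientwise infinite product of a family of formal power series;
it agrees with the product of the family whenever each factor `f k` is
`1 + (terms of order > k)` (so that the partial products converge
coefficientwise in the `q`-adic topology). -/
noncomputable def seriesProd {R : Type*} [CommRing R] (f : ℕ → PowerSeries R) : PowerSeries R :=
  PowerSeries.mk fun N => PowerSeries.coeff (R := R) N (∏ k ∈ Finset.range (N + 1), f k)

/-- The series `z`: the coefficient variable of `ℚ[z]` viewed as a constant
formal power series in `q`. -/
noncomputable def zz : PowerSeries (Polynomial ℚ) :=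
  PowerSeries.C (R := Polynomial ℚ) Polynomial.X

namespace Stmt2Aux

abbrev PSQ := PowerSeries (Polynomial ℚ)

noncomputable def Pq (n : ℕ) : PSQ := ∏ k ∈ Finset.range n, (1 - X ^ (k + 1))
noncomputable def Mq (n : ℕ) : PSQ := ∏ j ∈ Finset.range n, (1 + X ^ (j + 1))
def T (k : ℕ) : ℕ := ∑ i ∈ Finset.range k, i

lemma T_succ (k : ℕ) : T (k + 1) = T k + k := Finset.sum_range_succ _ _

lemma two_T (k : ℕ) : 2 * T k = k * (k - 1) := by
  have := Finset.sum_range_id_mul_two k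
  unfold T; omega

lemma T_eq (m : ℕ) : (m + 1) * (m + 1 + 1) / 2 = T (m + 2) := by
  have h := two_T (m + 2)
  have h2 : m + 2 - 1 = m + 1 := rfl
  rw [h2] at h
  have h3 : (m + 2) * (m + 1) = (m + 1) * (m + 1 + 1) := by ring
  omega

-- unit lemmas
lemma isUnit_of_cc_one {φ : PSQ} (h : constantCoeff φ = 1) : IsUnit φ :=
  isUnit_iff_constantCoeff.mpr (h ▸ isUnit_one)

lemma cc_one_sub_pow {j : ℕ} (h : j ≠ 0) : constantCoeff ((1 : PSQ) - X ^ j) = 1 := by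
  simp [map_sub, map_pow, constantCoeff_X, zero_pow h]

lemma cc_one_add_pow {j : ℕ} (h : j ≠ 0) : constantCoeff ((1 : PSQ) + X ^ j) = 1 := by
  simp [map_add, map_pow, constantCoeff_X, zero_pow h]

lemma isUnit_one_sub_pow {j : ℕ} (h : j ≠ 0) : IsUnit ((1 : PSQ) - X ^ j) :=
  isUnit_of_cc_one (cc_one_sub_pow h)

lemma isUnit_one_add_pow {j : ℕ} (h : j ≠ 0) : IsUnit ((1 : PSQ) + X ^ j) :=
  isUnit_of_cc_one (cc_one_add_pow h)

lemma isUnit_Pq (n : ℕ) : IsUnit (Pq n) := by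
  refine isUnit_of_cc_one ?_
  unfold Pq
  rw [map_prod]
  exact Finset.prod_eq_one fun k _ => cc_one_sub_pow k.succ_ne_zero

lemma isUnit_Mq (n : ℕ) : IsUnit (Mq n) := by
  refine isUnit_of_cc_one ?_
  unfold Mq
  rw [map_prod]
  exact Finset.prod_eq_one fun k _ => cc_one_add_pow k.succ_ne_zero

lemma Pq_succ (n : ℕ) : Pq (n + 1) = Pq n * (1 - X ^ (n + 1)) := Finset.prod_range_succ _ _
lemma Mq_succ (n : ℕ) : Mq (n + 1) = Mq n * (1 + X ^ (n + 1)) := Finset.prod_range_succ _ _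
lemma Pq_zero : Pq 0 = 1 := rfl
lemma Mq_zero : Mq 0 = 1 := rfl

-- inverse toolkit
lemma div_eq {a b u v : PSQ} (hu : IsUnit u) (hv : IsUnit v) (h : a * v = b * u) :
    a * Ring.inverse u = b * Ring.inverse v := by
  calc a * Ring.inverse u = a * Ring.inverse u * (v * Ring.inverse v) := by
        rw [Ring.mul_inverse_cancel _ hv, mul_one]
    _ = (a * v) * Ring.inverse u * Ring.inverse v := by ring
    _ = (b * u) * Ring.inverse u * Ring.inverse v := by rw [h]
    _ = b * (u * Ring.inverse u) * Ring.inverse v := by ring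
    _ = b * Ring.inverse v := by rw [Ring.mul_inverse_cancel _ hu, mul_one]

lemma inv_expand {u w : PSQ} (hu : IsUnit u) (hw : IsUnit w) :
    Ring.inverse u = w * Ring.inverse (u * w) := by
  have := div_eq (a := 1) (b := w) hu (hu.mul hw) (by ring)
  simpa using this

lemma unit_cancel {a b d : PSQ} (hd : IsUnit d) (h : a * d = b * d) : a = b := by
  have := congrArg (· * Ring.inverse d) h
  simpa [mul_assoc, Ring.mul_inverse_cancel _ hd] using this


-- ### coefficient basics
lemma coeff_seriesSum (f : ℕ → PSQ) (N : ℕ) :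
    coeff N (seriesSum f) = ∑ n ∈ Finset.range (N + 1), coeff N (f n) := coeff_mk _ _

lemma coeff_seriesProd (f : ℕ → PSQ) (N : ℕ) :
    coeff N (seriesProd f) = coeff N (∏ k ∈ Finset.range (N + 1), f k) := coeff_mk _ _

lemma seriesSum_congr {f g : ℕ → PSQ} (h : ∀ n, f n = g n) : seriesSum f = seriesSum g := by
  rw [funext h]

lemma seriesSum_sub (f g : ℕ → PSQ) :
    seriesSum (fun n => f n - g n) = seriesSum f - seriesSum g := by
  ext N
  simp [seriesSum, coeff_mk, Finset.sum_sub_distrib]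

lemma coeff_mul_eq_of_agree {F G : PSQ} (N : ℕ)
    (h : ∀ l, l ≤ N → coeff l F = coeff l G) (A : PSQ) :
    coeff N (A * F) = coeff N (A * G) := by
  rw [coeff_mul, coeff_mul]
  refine Finset.sum_congr rfl fun p hp => ?_
  have hm := Finset.HasAntidiagonal.mem_antidiagonal.mp hp
  rw [h p.2 (by omega)]

-- ### Tail predicate
def Tail (j : ℕ) (F : PSQ) : Prop := ∃ B, F = 1 + X ^ j * B

lemma Tail.mul {j : ℕ} {F G : PSQ} (hF : Tail j F) (hG : Tail j G) : Tail j (F * G) := by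
  obtain ⟨B, rfl⟩ := hF; obtain ⟨C, rfl⟩ := hG
  exact ⟨B + C + X ^ j * B * C, by ring⟩

lemma Tail.one (j : ℕ) : Tail j (1 : PSQ) := ⟨0, by ring⟩

lemma Tail.prod {j : ℕ} {s : Finset ℕ} {f : ℕ → PSQ} (h : ∀ k ∈ s, Tail j (f k)) :
    Tail j (∏ k ∈ s, f k) := by
  classical
  induction s using Finset.induction with
  | empty => simpa using Tail.one j
  | @insert x s hx ih =>
    rw [Finset.prod_insert hx]
    exact (h _ (Finset.mem_insert_self _ _)).mul
      (ih fun k hk => h k (Finset.mem_insert_of_mem hk))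

lemma coeff_X_pow_mul_eq_zero {N j : ℕ} (h : N < j) (B : PSQ) :
    coeff N (X ^ j * B) = 0 := by
  rw [coeff_X_pow_mul']
  simp [Nat.not_le.mpr h]

lemma coeff_X_pow_factor_zero {e N : ℕ} (h : N < e) (a b : PSQ) :
    coeff N (a * X ^ e * b) = 0 := by
  have hr : a * X ^ e * b = X ^ e * (a * b) := by ring
  rw [hr, coeff_X_pow_mul_eq_zero h]

lemma coeff_mul_tail {N j : ℕ} (h : N < j) {G : PSQ} (hG : Tail j G) (A : PSQ) :
    coeff N (A * G) = coeff N A := by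
  obtain ⟨B, rfl⟩ := hG
  have hr : A * (1 + X ^ j * B) = A + X ^ j * (A * B) := by ring
  rw [hr, map_add, coeff_X_pow_mul_eq_zero h, add_zero]

-- ### seriesProd truncation
lemma coeff_prod_range_le {f : ℕ → PSQ} (hf : ∀ k, Tail (k + 1) (f k)) {N M : ℕ} (hM : N ≤ M) :
    coeff N (∏ k ∈ Finset.range (M + 1), f k) = coeff N (∏ k ∈ Finset.range (N + 1), f k) := by
  induction M with
  | zero => obtain rfl : N = 0 := Nat.le_zero.mp hM; rfl
  | succ M ih =>
    rcases Nat.lt_or_ge N (M + 1) with h | h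
    · rw [Finset.prod_range_succ, coeff_mul_tail (by omega) (hf (M + 1)), ih (by omega)]
    · obtain rfl : N = M + 1 := by omega
      rfl

lemma coeff_seriesProd_prefactor (f : ℕ → PSQ) (hf : ∀ k, Tail (k + 1) (f k)) (A : PSQ) (N : ℕ) :
    coeff N (A * seriesProd f) = coeff N (A * ∏ k ∈ Finset.range (N + 1), f k) := by
  refine coeff_mul_eq_of_agree N (fun l hl => ?_) A
  exact (coeff_seriesProd f l).trans (coeff_prod_range_le hf hl).symm

lemma seriesProd_split (f : ℕ → PSQ) (hf : ∀ k, Tail (k + 1) (f k))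
    (hf' : ∀ k, Tail (k + 1) (f (k + 1))) :
    seriesProd f = f 0 * seriesProd (fun k => f (k + 1)) := by
  refine PowerSeries.ext fun N => ?_
  calc coeff N (seriesProd f) = coeff N (∏ k ∈ Finset.range (N + 1), f k) :=
        coeff_seriesProd f N
    _ = coeff N (∏ k ∈ Finset.range (N + 1 + 1), f k) :=
        (coeff_prod_range_le hf (Nat.le_succ N)).symm
    _ = coeff N ((∏ k ∈ Finset.range (N + 1), f (k + 1)) * f 0) := by
        rw [Finset.prod_range_succ']
    _ = coeff N (f 0 * ∏ k ∈ Finset.range (N + 1), f (k + 1)) := by rw [mul_comm]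
    _ = coeff N (f 0 * seriesProd fun k => f (k + 1)) :=
        (coeff_seriesProd_prefactor _ hf' _ _).symm

-- ### seriesSum multiplication / shifting / swapping
lemma mul_seriesSum (A : PSQ) (f : ℕ → PSQ) (hd : ∀ i N : ℕ, N < i → coeff N (f i) = 0) :
    A * seriesSum f = seriesSum fun i => A * f i := by
  refine PowerSeries.ext fun N => ?_
  rw [coeff_mul, coeff_seriesSum]
  have step : ∀ p ∈ Finset.HasAntidiagonal.antidiagonal N,
      coeff p.1 A * coeff p.2 (seriesSum f)
        = ∑ n ∈ Finset.range (N + 1), coeff p.1 A * coeff p.2 (f n) := by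
    intro p hp
    have hm := Finset.HasAntidiagonal.mem_antidiagonal.mp hp
    rw [coeff_seriesSum, Finset.mul_sum]
    refine Finset.sum_subset (Finset.range_subset_range.mpr (by omega)) fun n _ hn => ?_
    rw [hd n p.2 (by simp only [Finset.mem_range] at hn ⊢; omega), mul_zero]
  calc ∑ p ∈ Finset.HasAntidiagonal.antidiagonal N, coeff p.1 A * coeff p.2 (seriesSum f)
      = ∑ p ∈ Finset.HasAntidiagonal.antidiagonal N, ∑ n ∈ Finset.range (N + 1),
          coeff p.1 A * coeff p.2 (f n) := Finset.sum_congr rfl step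
    _ = ∑ n ∈ Finset.range (N + 1), ∑ p ∈ Finset.HasAntidiagonal.antidiagonal N,
          coeff p.1 A * coeff p.2 (f n) := Finset.sum_comm
    _ = ∑ n ∈ Finset.range (N + 1), coeff N (A * f n) := by
        refine Finset.sum_congr rfl fun n _ => ?_
        rw [coeff_mul]

lemma seriesSum_shift {g h : ℕ → PSQ} (h0 : g 0 = 0) (hs : ∀ k, g (k + 1) = h k)
    (hd : ∀ N, coeff N (h N) = 0) : seriesSum g = seriesSum h := by
  ext N
  rw [coeff_seriesSum, coeff_seriesSum, Finset.sum_range_succ']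
  simp only [hs, h0, map_zero, add_zero]
  rw [Finset.sum_range_succ, hd, add_zero]

lemma sum_square_eq_sum_diag {M : Type*} [AddCommMonoid M] (c : ℕ → ℕ → M) (N : ℕ)
    (hv : ∀ n i, N < n + i → c n i = 0) :
    ∑ n ∈ Finset.range (N + 1), ∑ i ∈ Finset.range (N + 1), c n i
      = ∑ m ∈ Finset.range (N + 1), ∑ n ∈ Finset.range (m + 1), c n (m - n) := by
  have step1 : ∀ n ∈ Finset.range (N + 1),
      ∑ i ∈ Finset.range (N + 1), c n i = ∑ i ∈ Finset.range (N + 1 - n), c n i := by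
    intro n hn
    refine (Finset.sum_subset (Finset.range_subset_range.mpr (by omega)) fun i _ hi => ?_).symm
    simp only [Finset.mem_range] at hi hn
    exact hv n i (by omega)
  rw [Finset.sum_congr rfl step1, Finset.sum_sigma', Finset.sum_sigma']
  refine Finset.sum_nbij' (fun p => ⟨p.1 + p.2, p.1⟩) (fun p => ⟨p.2, p.1 - p.2⟩)
    ?_ ?_ ?_ ?_ ?_
  · rintro ⟨n, i⟩ hp
    simp only [Finset.mem_sigma, Finset.mem_range] at hp ⊢
    omega
  · rintro ⟨m, n⟩ hp
    simp only [Finset.mem_sigma, Finset.mem_range] at hp ⊢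
    omega
  · rintro ⟨n, i⟩ hp
    simp only [Nat.add_sub_cancel_left]
  · rintro ⟨m, n⟩ hp
    simp only [Finset.mem_sigma, Finset.mem_range] at hp
    have hnm : n + (m - n) = m := by omega
    simp only [hnm]
  · rintro ⟨n, i⟩ hp
    simp only [Finset.mem_sigma, Finset.mem_range] at hp
    simp only [Nat.add_sub_cancel_left]

lemma seriesSum_swap (F : ℕ → ℕ → PSQ) (hd : ∀ n i N : ℕ, N < n + i → coeff N (F n i) = 0) :
    seriesSum (fun n => seriesSum (F n)) =
      seriesSum (fun m => ∑ n ∈ Finset.range (m + 1), F n (m - n)) := by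
  refine PowerSeries.ext fun N => ?_
  rw [coeff_seriesSum, coeff_seriesSum]
  simp only [coeff_seriesSum, map_sum]
  exact sum_square_eq_sum_diag (fun n i => coeff N (F n i)) N fun n i h => hd n i N h


-- ### Euler's expansion of the infinite product
noncomputable def Ee (j i : ℕ) : PSQ :=
  (-1) ^ i * zz ^ i * X ^ (j * i + T i) * Ring.inverse (Pq i)

noncomputable def Pinf (j : ℕ) : PSQ := seriesProd fun k => 1 - zz * X ^ (j + k)

lemma T_zero : T 0 = 0 := rfl

lemma Ee_zero (j : ℕ) : Ee j 0 = 1 := by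
  simp [Ee, T_zero, Pq_zero, Ring.inverse_one]

lemma coeff_Ee_zero {j i N : ℕ} (h : N < j * i + T i) : coeff N (Ee j i) = 0 :=
  coeff_X_pow_factor_zero h _ _

lemma coeff_Ee_zero' {j i N : ℕ} (h : N < i) : coeff N (Ee (j + 1) i) = 0 := by
  refine coeff_Ee_zero (lt_of_lt_of_le h ?_)
  calc i = 1 * i := (one_mul i).symm
    _ ≤ (j + 1) * i := Nat.mul_le_mul_right i (by omega)
    _ ≤ (j + 1) * i + T i := Nat.le_add_right _ _

lemma invPq_succ (k : ℕ) :
    Ring.inverse (Pq (k + 1)) = X ^ (k + 1) * Ring.inverse (Pq (k + 1)) + Ring.inverse (Pq k) := by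
  have h : Ring.inverse (Pq k)
      = (1 - X ^ (k + 1)) * Ring.inverse (Pq (k + 1)) := by
    rw [Pq_succ]
    exact inv_expand (isUnit_Pq k) (isUnit_one_sub_pow k.succ_ne_zero)
  rw [h]; ring

lemma Ee_rec (j k : ℕ) :
    Ee (j + 1) (k + 1) = Ee (j + 2) (k + 1) - zz * X ^ (j + 1) * Ee (j + 2) k := by
  unfold Ee
  rw [T_succ]
  nth_rewrite 1 [invPq_succ k]
  ring

lemma tail_factor (j k : ℕ) : Tail (k + 1) ((1 : PSQ) - zz * X ^ (j + 1 + k)) :=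
  ⟨-(zz * X ^ j), by ring⟩

lemma Pinf_split (j : ℕ) : Pinf (j + 1) = (1 - zz * X ^ (j + 1)) * Pinf (j + 2) := by
  have h := seriesProd_split (fun k => 1 - zz * X ^ (j + 1 + k))
    (fun k => tail_factor j k)
    (fun k => by
      show Tail (k + 1) ((1 : PSQ) - zz * X ^ (j + 1 + (k + 1)))
      have he : j + 1 + (k + 1) = j + 1 + 1 + k := by omega
      rw [he]
      exact tail_factor (j + 1) k)
  unfold Pinf
  have h2 : (fun k => (1 : PSQ) - zz * X ^ (j + 1 + (k + 1)))
      = fun k => 1 - zz * X ^ (j + 2 + k) := by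
    funext k
    have he : j + 1 + (k + 1) = j + 2 + k := by omega
    rw [he]
  rw [h2] at h
  simpa using h

noncomputable def EeShift (j : ℕ) : ℕ → PSQ
  | 0 => 0
  | k + 1 => zz * X ^ (j + 1) * Ee (j + 2) k

lemma Esum_split (j : ℕ) :
    seriesSum (Ee (j + 1)) = (1 - zz * X ^ (j + 1)) * seriesSum (Ee (j + 2)) := by
  have hshift : seriesSum (EeShift j) = seriesSum (fun i => zz * X ^ (j + 1) * Ee (j + 2) i) := by
    refine seriesSum_shift rfl (fun k => rfl) fun N => ?_
    have hr : zz * X ^ (j + 1) * Ee (j + 2) N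
        = (zz * ((-1) ^ N * zz ^ N)) * X ^ ((j + 1) + ((j + 2) * N + T N)) * Ring.inverse (Pq N) := by
      unfold Ee
      rw [pow_add]
      ring
    rw [hr]
    refine coeff_X_pow_factor_zero ?_ _ _
    have hN : N ≤ (j + 2) * N := Nat.le_mul_of_pos_left N (by omega)
    omega
  have hmul : zz * X ^ (j + 1) * seriesSum (Ee (j + 2))
      = seriesSum (fun i => zz * X ^ (j + 1) * Ee (j + 2) i) :=
    mul_seriesSum _ _ (fun i N h => coeff_Ee_zero' h)
  have hterm : ∀ i, Ee (j + 1) i = Ee (j + 2) i - EeShift j i := by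
    intro i
    cases i with
    | zero => simp [Ee_zero, EeShift]
    | succ k =>
      show Ee (j + 1) (k + 1) = Ee (j + 2) (k + 1) - zz * X ^ (j + 1) * Ee (j + 2) k
      exact Ee_rec j k
  calc seriesSum (Ee (j + 1))
      = seriesSum (fun i => Ee (j + 2) i - EeShift j i) := seriesSum_congr hterm
    _ = seriesSum (Ee (j + 2)) - seriesSum (EeShift j) := seriesSum_sub _ _
    _ = seriesSum (Ee (j + 2)) - zz * X ^ (j + 1) * seriesSum (Ee (j + 2)) := by
        rw [hshift, hmul]
    _ = (1 - zz * X ^ (j + 1)) * seriesSum (Ee (j + 2)) := by ring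

lemma coeff_Pinf_large {N J : ℕ} (h : N < J) : coeff N (Pinf J) = coeff N (1 : PSQ) := by
  rw [Pinf, coeff_seriesProd]
  obtain ⟨d, rfl⟩ : ∃ d, J = N + 1 + d := ⟨J - (N + 1), by omega⟩
  have htail : Tail (N + 1) (∏ k ∈ Finset.range (N + 1), ((1 : PSQ) - zz * X ^ (N + 1 + d + k))) := by
    refine Tail.prod fun k _ => ⟨-(zz * X ^ (d + k)), by ring⟩
  obtain ⟨B, hB⟩ := htail
  rw [hB]
  have h1 : (1 : PSQ) + X ^ (N + 1) * B = 1 * (1 + X ^ (N + 1) * B) := by ring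
  rw [h1, coeff_mul_tail (by omega) ⟨B, rfl⟩ 1]

lemma coeff_Esum_large {N J : ℕ} (h : N < J) :
    coeff N (seriesSum (Ee J)) = coeff N (1 : PSQ) := by
  rw [coeff_seriesSum]
  rw [Finset.sum_eq_single_of_mem 0 (Finset.mem_range.mpr (by omega))]
  · rw [Ee_zero]
  · intro i _ hi
    refine coeff_Ee_zero ?_
    have h1 : J ≤ J * i := Nat.le_mul_of_pos_right J (by omega)
    omega

lemma euler_coeff (N : ℕ) : ∀ j, coeff N (Pinf (j + 1)) = coeff N (seriesSum (Ee (j + 1))) := by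
  induction N using Nat.strong_induction_on with
  | _ N IH =>
    have hzz : ∀ (D₁ D₂ : PSQ) (j : ℕ), (∀ M, M < N → coeff M D₁ = coeff M D₂) →
        coeff N (zz * X ^ (j + 1) * D₁) = coeff N (zz * X ^ (j + 1) * D₂) := by
      intro D₁ D₂ j hM
      have hc : ∀ D : PSQ, zz * X ^ (j + 1) * D = zz * (X ^ (j + 1) * D) := fun D => by ring
      rw [hc, hc]
      simp only [zz]
      rw [coeff_C_mul, coeff_C_mul, coeff_X_pow_mul', coeff_X_pow_mul']
      by_cases hj : j + 1 ≤ N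
      · rw [if_pos hj, if_pos hj, hM _ (by omega)]
      · rw [if_neg hj, if_neg hj]
    have step : ∀ j, coeff N (Pinf (j + 1)) - coeff N (seriesSum (Ee (j + 1)))
        = coeff N (Pinf (j + 2)) - coeff N (seriesSum (Ee (j + 2))) := by
      intro j
      have h1 : coeff N (Pinf (j + 1))
          = coeff N (Pinf (j + 2)) - coeff N (zz * X ^ (j + 1) * Pinf (j + 2)) := by
        rw [Pinf_split j]
        have : (1 - zz * X ^ (j + 1)) * Pinf (j + 2)
            = Pinf (j + 2) - zz * X ^ (j + 1) * Pinf (j + 2) := by ring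
        rw [this, map_sub]
      have h2 : coeff N (seriesSum (Ee (j + 1)))
          = coeff N (seriesSum (Ee (j + 2)))
            - coeff N (zz * X ^ (j + 1) * seriesSum (Ee (j + 2))) := by
        rw [Esum_split j]
        have : (1 - zz * X ^ (j + 1)) * seriesSum (Ee (j + 2))
            = seriesSum (Ee (j + 2)) - zz * X ^ (j + 1) * seriesSum (Ee (j + 2)) := by ring
        rw [this, map_sub]
      have h3 : coeff N (zz * X ^ (j + 1) * Pinf (j + 2))
          = coeff N (zz * X ^ (j + 1) * seriesSum (Ee (j + 2))) :=
        hzz _ _ j fun M hMN => IH M hMN (j + 1)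
      rw [h1, h2, h3]
      ring
    have iter : ∀ t j, coeff N (Pinf (j + 1)) - coeff N (seriesSum (Ee (j + 1)))
        = coeff N (Pinf (j + 1 + t)) - coeff N (seriesSum (Ee (j + 1 + t))) := by
      intro t
      induction t with
      | zero => intro j; rfl
      | succ t ih =>
        intro j
        have he : j + 1 + (t + 1) = (j + 1) + 1 + t := by omega
        rw [step j, he]
        exact ih (j + 1)
    intro j
    have hfin := iter (N + 1) j
    rw [coeff_Pinf_large (show N < j + 1 + (N + 1) by omega),
      coeff_Esum_large (show N < j + 1 + (N + 1) by omega), sub_self] at hfin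
    have := sub_eq_zero.mp hfin
    exact this

lemma euler (j : ℕ) : Pinf (j + 1) = seriesSum (Ee (j + 1)) :=
  PowerSeries.ext fun N => euler_coeff N j

-- ### the finite identity
noncomputable def vv (k c : ℕ) : PSQ :=
  (-1) ^ k * X ^ T (k + 1) * Ring.inverse (Pq c) * Ring.inverse (Pq k)
    * Ring.inverse (1 + X ^ (k + 1))

noncomputable def ww (a b : ℕ) : PSQ :=
  (-1) ^ (a + 1) * X ^ (T (a + 2) + b) * Ring.inverse (Pq b) * Ring.inverse (Pq a)
    * Ring.inverse (1 - X ^ (a + b + 1))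

noncomputable def et (k c : ℕ) : PSQ :=
  (-1) ^ k * X ^ (T (k + 1) + c + 1) * Ring.inverse (Pq (c + 1)) * Ring.inverse (Pq k)

lemma A1 (k c : ℕ) : (1 + X ^ (k + c + 2)) * vv k (c + 1) - vv k c = et k c := by
  have hd : IsUnit (Pq (c + 1) * Pq k * (1 + X ^ (k + 1))) :=
    ((isUnit_Pq (c + 1)).mul (isUnit_Pq k)).mul (isUnit_one_add_pow k.succ_ne_zero)
  refine unit_cancel hd ?_
  have e1 : vv k (c + 1) * (Pq (c + 1) * Pq k * (1 + X ^ (k + 1)))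
      = (-1) ^ k * X ^ T (k + 1) := by
    unfold vv
    calc (-1) ^ k * X ^ T (k + 1) * Ring.inverse (Pq (c + 1)) * Ring.inverse (Pq k)
          * Ring.inverse (1 + X ^ (k + 1)) * (Pq (c + 1) * Pq k * (1 + X ^ (k + 1)))
        = (-1) ^ k * X ^ T (k + 1) * (Ring.inverse (Pq (c + 1)) * Pq (c + 1))
          * (Ring.inverse (Pq k) * Pq k)
          * (Ring.inverse (1 + X ^ (k + 1)) * (1 + X ^ (k + 1))) := by ring
      _ = (-1) ^ k * X ^ T (k + 1) := by
          rw [Ring.inverse_mul_cancel _ (isUnit_Pq (c + 1)),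
            Ring.inverse_mul_cancel _ (isUnit_Pq k),
            Ring.inverse_mul_cancel _ (isUnit_one_add_pow k.succ_ne_zero)]
          ring
  have e2 : vv k c * (Pq (c + 1) * Pq k * (1 + X ^ (k + 1)))
      = (-1) ^ k * X ^ T (k + 1) * (1 - X ^ (c + 1)) := by
    unfold vv
    rw [Pq_succ c]
    calc (-1) ^ k * X ^ T (k + 1) * Ring.inverse (Pq c) * Ring.inverse (Pq k)
          * Ring.inverse (1 + X ^ (k + 1)) * (Pq c * (1 - X ^ (c + 1)) * Pq k * (1 + X ^ (k + 1)))
        = (-1) ^ k * X ^ T (k + 1) * (1 - X ^ (c + 1)) * (Ring.inverse (Pq c) * Pq c)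
          * (Ring.inverse (Pq k) * Pq k)
          * (Ring.inverse (1 + X ^ (k + 1)) * (1 + X ^ (k + 1))) := by ring
      _ = _ := by
          rw [Ring.inverse_mul_cancel _ (isUnit_Pq c),
            Ring.inverse_mul_cancel _ (isUnit_Pq k),
            Ring.inverse_mul_cancel _ (isUnit_one_add_pow k.succ_ne_zero)]
          ring
  have e3 : et k c * (Pq (c + 1) * Pq k * (1 + X ^ (k + 1)))
      = (-1) ^ k * X ^ (T (k + 1) + c + 1) * (1 + X ^ (k + 1)) := by
    unfold et
    calc (-1) ^ k * X ^ (T (k + 1) + c + 1) * Ring.inverse (Pq (c + 1)) * Ring.inverse (Pq k)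
          * (Pq (c + 1) * Pq k * (1 + X ^ (k + 1)))
        = (-1) ^ k * X ^ (T (k + 1) + c + 1) * (1 + X ^ (k + 1))
          * (Ring.inverse (Pq (c + 1)) * Pq (c + 1)) * (Ring.inverse (Pq k) * Pq k) := by ring
      _ = _ := by
          rw [Ring.inverse_mul_cancel _ (isUnit_Pq (c + 1)),
            Ring.inverse_mul_cancel _ (isUnit_Pq k)]
          ring
  rw [sub_mul, mul_assoc, e1, e2, e3]
  ring

lemma A2a (c : ℕ) : et 0 c = - ww 0 c := by
  unfold et ww
  have h1 : Ring.inverse (Pq (c + 1)) = Ring.inverse (Pq c) * Ring.inverse (1 - X ^ (c + 1)) := by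
    rw [Pq_succ c, Ring.mul_inverse_rev]
    ring
  rw [h1]
  have hT1 : T 1 = 0 := rfl
  have hT2 : T 2 = 1 := rfl
  rw [hT1, hT2]
  have h0 : (0 : ℕ) + c + 1 = c + 1 := by omega
  rw [h0]
  ring

lemma A2b (k c : ℕ) : et (k + 1) c = ww k (c + 1) - ww (k + 1) c := by
  have hu1 : IsUnit (Pq (c + 1)) := isUnit_Pq _
  have hu2 : IsUnit (Pq (k + 1)) := isUnit_Pq _
  have hu3 : IsUnit ((1 : PSQ) - X ^ (k + c + 2)) := isUnit_one_sub_pow (by omega)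
  have hd : IsUnit (Pq (c + 1) * Pq (k + 1) * (1 - X ^ (k + c + 2))) := (hu1.mul hu2).mul hu3
  refine unit_cancel hd ?_
  have e0 : et (k + 1) c * (Pq (c + 1) * Pq (k + 1) * (1 - X ^ (k + c + 2)))
      = (-1) ^ (k + 1) * X ^ (T (k + 2) + c + 1) * (1 - X ^ (k + c + 2)) := by
    unfold et
    calc (-1) ^ (k + 1) * X ^ (T (k + 2) + c + 1) * Ring.inverse (Pq (c + 1))
          * Ring.inverse (Pq (k + 1)) * (Pq (c + 1) * Pq (k + 1) * (1 - X ^ (k + c + 2)))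
        = (-1) ^ (k + 1) * X ^ (T (k + 2) + c + 1) * (1 - X ^ (k + c + 2))
          * (Ring.inverse (Pq (c + 1)) * Pq (c + 1))
          * (Ring.inverse (Pq (k + 1)) * Pq (k + 1)) := by ring
      _ = _ := by rw [Ring.inverse_mul_cancel _ hu1, Ring.inverse_mul_cancel _ hu2]; ring
  have e1 : ww k (c + 1) * (Pq (c + 1) * Pq (k + 1) * (1 - X ^ (k + c + 2)))
      = (-1) ^ (k + 1) * X ^ (T (k + 2) + c + 1) * (1 - X ^ (k + 1)) := by
    unfold ww
    have hexp : k + (c + 1) + 1 = k + c + 2 := by omega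
    rw [hexp, Pq_succ k]
    calc (-1) ^ (k + 1) * X ^ (T (k + 2) + (c + 1)) * Ring.inverse (Pq (c + 1))
          * Ring.inverse (Pq k) * Ring.inverse (1 - X ^ (k + c + 2))
          * (Pq (c + 1) * (Pq k * (1 - X ^ (k + 1))) * (1 - X ^ (k + c + 2)))
        = (-1) ^ (k + 1) * X ^ (T (k + 2) + (c + 1)) * (1 - X ^ (k + 1))
          * (Ring.inverse (Pq (c + 1)) * Pq (c + 1)) * (Ring.inverse (Pq k) * Pq k)
          * (Ring.inverse (1 - X ^ (k + c + 2)) * (1 - X ^ (k + c + 2))) := by ring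
      _ = _ := by
          rw [Ring.inverse_mul_cancel _ hu1, Ring.inverse_mul_cancel _ (isUnit_Pq k),
            Ring.inverse_mul_cancel _ hu3]
          have : T (k + 2) + (c + 1) = T (k + 2) + c + 1 := by omega
          rw [this]
          ring
  have e2 : ww (k + 1) c * (Pq (c + 1) * Pq (k + 1) * (1 - X ^ (k + c + 2)))
      = (-1) ^ (k + 2) * X ^ (T (k + 3) + c) * (1 - X ^ (c + 1)) := by
    unfold ww
    have hexp : k + 1 + c + 1 = k + c + 2 := by omega
    rw [hexp, Pq_succ c]
    calc (-1) ^ (k + 1 + 1) * X ^ (T (k + 1 + 2) + c) * Ring.inverse (Pq c)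
          * Ring.inverse (Pq (k + 1)) * Ring.inverse (1 - X ^ (k + c + 2))
          * (Pq c * (1 - X ^ (c + 1)) * Pq (k + 1) * (1 - X ^ (k + c + 2)))
        = (-1) ^ (k + 1 + 1) * X ^ (T (k + 1 + 2) + c) * (1 - X ^ (c + 1))
          * (Ring.inverse (Pq c) * Pq c) * (Ring.inverse (Pq (k + 1)) * Pq (k + 1))
          * (Ring.inverse (1 - X ^ (k + c + 2)) * (1 - X ^ (k + c + 2))) := by ring
      _ = _ := by
          rw [Ring.inverse_mul_cancel _ (isUnit_Pq c), Ring.inverse_mul_cancel _ hu2,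
            Ring.inverse_mul_cancel _ hu3]
          ring
  rw [sub_mul, e0, e1, e2]
  have hT3 : T (k + 3) = T (k + 2) + (k + 2) := T_succ (k + 2)
  rw [hT3]
  ring

lemma A3 (k : ℕ) : (1 + X ^ (k + 2)) * vv (k + 1) 0 = ww k 0 := by
  have hu1 : IsUnit (Pq (k + 1)) := isUnit_Pq _
  have hu2 : IsUnit ((1 : PSQ) + X ^ (k + 2)) := isUnit_one_add_pow (by omega)
  have hu3 : IsUnit ((1 : PSQ) - X ^ (k + 1)) := isUnit_one_sub_pow (by omega)
  have hd : IsUnit (Pq (k + 1) * (1 + X ^ (k + 2)) * (1 - X ^ (k + 1))) := (hu1.mul hu2).mul hu3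
  refine unit_cancel hd ?_
  have e1 : (1 + X ^ (k + 2)) * vv (k + 1) 0 * (Pq (k + 1) * (1 + X ^ (k + 2)) * (1 - X ^ (k + 1)))
      = (-1) ^ (k + 1) * X ^ T (k + 2) * (1 + X ^ (k + 2)) * (1 - X ^ (k + 1)) := by
    unfold vv
    rw [Pq_zero]
    calc (1 + X ^ (k + 2)) * ((-1) ^ (k + 1) * X ^ T (k + 1 + 1) * Ring.inverse 1
          * Ring.inverse (Pq (k + 1)) * Ring.inverse (1 + X ^ (k + 1 + 1)))
          * (Pq (k + 1) * (1 + X ^ (k + 2)) * (1 - X ^ (k + 1)))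
        = (-1) ^ (k + 1) * X ^ T (k + 2) * (1 + X ^ (k + 2)) * (1 - X ^ (k + 1)) * Ring.inverse 1
          * (Ring.inverse (Pq (k + 1)) * Pq (k + 1))
          * (Ring.inverse (1 + X ^ (k + 2)) * (1 + X ^ (k + 2))) := by ring
      _ = _ := by
          rw [Ring.inverse_one, Ring.inverse_mul_cancel _ hu1, Ring.inverse_mul_cancel _ hu2]
          ring
  have e2 : ww k 0 * (Pq (k + 1) * (1 + X ^ (k + 2)) * (1 - X ^ (k + 1)))
      = (-1) ^ (k + 1) * X ^ T (k + 2) * (1 + X ^ (k + 2)) * (1 - X ^ (k + 1)) := by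
    unfold ww
    rw [Pq_zero, Pq_succ k]
    calc (-1) ^ (k + 1) * X ^ (T (k + 2) + 0) * Ring.inverse 1 * Ring.inverse (Pq k)
          * Ring.inverse (1 - X ^ (k + 0 + 1))
          * (Pq k * (1 - X ^ (k + 1)) * (1 + X ^ (k + 2)) * (1 - X ^ (k + 1)))
        = (-1) ^ (k + 1) * X ^ (T (k + 2) + 0) * (1 + X ^ (k + 2)) * (1 - X ^ (k + 1))
          * Ring.inverse 1 * (Ring.inverse (Pq k) * Pq k)
          * (Ring.inverse (1 - X ^ (k + 0 + 1)) * (1 - X ^ (k + 0 + 1))) := by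
          have h0 : k + 0 + 1 = k + 1 := by omega
          rw [h0]; ring
      _ = _ := by
          rw [Ring.inverse_one, Ring.inverse_mul_cancel _ (isUnit_Pq k),
            Ring.inverse_mul_cancel _ (isUnit_one_sub_pow (show k + 0 + 1 ≠ 0 by omega))]
          ring
  rw [e1, e2]

noncomputable def GG (m : ℕ) : ℕ → PSQ
  | 0 => 0
  | k + 1 => ww k (m - k)

lemma clubs : ∀ m, ∑ k ∈ Finset.range (m + 1), vv k (m - k) = Ring.inverse (Mq (m + 1)) := by
  intro m
  induction m with
  | zero =>
    have h1 : Mq 1 = 1 + X ^ 1 := by rw [Mq_succ, Mq_zero, one_mul]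
    rw [show (0:ℕ) + 1 = 1 from rfl, Finset.sum_range_one]
    rw [h1]
    unfold vv
    have hT1 : T 1 = 0 := rfl
    rw [hT1, Pq_zero, Ring.inverse_one]
    ring
  | succ m ih =>
    have hu : IsUnit ((1 : PSQ) + X ^ (m + 2)) := isUnit_one_add_pow (by omega)
    refine unit_cancel hu ?_
    have hrhs : Ring.inverse (Mq (m + 2)) * (1 + X ^ (m + 2)) = Ring.inverse (Mq (m + 1)) := by
      rw [Mq_succ (m + 1), Ring.mul_inverse_rev]
      have he : m + 1 + 1 = m + 2 := rfl
      rw [he]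
      calc Ring.inverse (1 + X ^ (m + 2)) * Ring.inverse (Mq (m + 1)) * (1 + X ^ (m + 2))
          = Ring.inverse (Mq (m + 1))
            * (Ring.inverse (1 + X ^ (m + 2)) * (1 + X ^ (m + 2))) := by ring
        _ = _ := by rw [Ring.inverse_mul_cancel _ hu]; ring
    rw [hrhs, Finset.sum_mul, Finset.sum_range_succ]
    have hlast : vv (m + 1) (m + 1 - (m + 1)) * (1 + X ^ (m + 2)) = ww m 0 := by
      rw [Nat.sub_self, mul_comm]
      exact A3 m
    have hmain : ∀ k ∈ Finset.range (m + 1),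
        vv k (m + 1 - k) * (1 + X ^ (m + 2)) = vv k (m - k) + (GG m k - GG m (k + 1)) := by
      intro k hk
      have hkm : k ≤ m := by simp only [Finset.mem_range] at hk; omega
      have hsub : m + 1 - k = (m - k) + 1 := by omega
      have hexp : k + (m - k) + 2 = m + 2 := by omega
      have hA1 := A1 k (m - k)
      rw [hexp] at hA1
      have : vv k (m + 1 - k) * (1 + X ^ (m + 2))
          = (1 + X ^ (m + 2)) * vv k ((m - k) + 1) := by rw [hsub]; ring
      rw [this]
      have h2 : (1 + X ^ (m + 2)) * vv k ((m - k) + 1) = vv k (m - k) + et k (m - k) := by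
        have := hA1
        linear_combination this
      rw [h2]
      refine congrArg (vv k (m - k) + ·) ?_
      -- et k (m-k) = GG m k - GG m (k+1)
      cases k with
      | zero =>
        show et 0 (m - 0) = GG m 0 - GG m 1
        have : GG m 0 = 0 := rfl
        have h1 : GG m 1 = ww 0 (m - 0) := rfl
        rw [this, h1, A2a (m - 0)]
        ring
      | succ k0 =>
        show et (k0 + 1) (m - (k0 + 1)) = GG m (k0 + 1) - GG m (k0 + 2)
        have hk0 : k0 + 1 ≤ m := hkm
        have hc1 : m - (k0 + 1) + 1 = m - k0 := by omega
        have h1 : GG m (k0 + 1) = ww k0 (m - k0) := rfl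
        have h2 : GG m (k0 + 2) = ww (k0 + 1) (m - (k0 + 1)) := rfl
        rw [h1, h2, A2b k0 (m - (k0 + 1)), hc1]
    rw [Finset.sum_congr rfl hmain, Finset.sum_add_distrib, ih, Finset.sum_range_sub']
    have hG0 : GG m 0 = 0 := rfl
    have hGm : GG m (m + 1) = ww m 0 := by
      show ww m (m - m) = ww m 0
      rw [Nat.sub_self]
    rw [hG0, hGm, hlast]
    ring

-- ### assembly
lemma sq_eq : ∀ a : ℕ, (a + 1) * (a + 1) = T (a + 2) + T (a + 1) := by
  intro a
  induction a with
  | zero => simp [T, Finset.sum_range_succ]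
  | succ a ih =>
    have h1 : (a + 1 + 1) * (a + 1 + 1) = (a + 1) * (a + 1) + (2 * a + 3) := by ring
    have h2 : T (a + 1 + 2) = T (a + 2) + (a + 2) := by
      have he : a + 1 + 2 = (a + 2) + 1 := by omega
      rw [he, T_succ]
    have h3 : T (a + 1 + 1) = T (a + 1) + (a + 1) := by
      have he : a + 1 + 1 = (a + 1) + 1 := by omega
      rw [he, T_succ]
    omega

lemma exp_key (a : ℕ) : ∀ b : ℕ,
    (a + 1) * (a + 1) + (a + 2) * b + T b = T (a + b + 2) + T (a + 1) := by
  intro b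
  induction b with
  | zero =>
    have h0 : (a + 2) * 0 = 0 := by ring
    have h1 : T 0 = 0 := rfl
    have h2 : T (a + 0 + 2) = T (a + 2) := by
      have he : a + 0 + 2 = a + 2 := by omega
      rw [he]
    have h3 := sq_eq a
    omega
  | succ b ih =>
    have h1 : (a + 2) * (b + 1) = (a + 2) * b + (a + 2) := by ring
    have h2 : T (b + 1) = T b + b := T_succ b
    have h3 : T (a + (b + 1) + 2) = T (a + b + 2) + (a + b + 2) := by
      have he : a + (b + 1) + 2 = (a + b + 2) + 1 := by omega
      rw [he, T_succ]
    omega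

noncomputable def FF (n i : ℕ) : PSQ :=
  (-1) ^ i * zz ^ (n + 1 + i) * X ^ ((n + 1) * (n + 1) + (n + 2) * i + T i)
    * (Ring.inverse (Pq i) * (Ring.inverse (Pq n) * Ring.inverse (1 + X ^ (n + 1))))

lemma FF_decay (n i N : ℕ) (h : N < n + i) : coeff N (FF n i) = 0 := by
  have hr : FF n i = ((-1) ^ i * zz ^ (n + 1 + i))
      * X ^ ((n + 1) * (n + 1) + (n + 2) * i + T i)
      * (Ring.inverse (Pq i) * (Ring.inverse (Pq n) * Ring.inverse (1 + X ^ (n + 1)))) := by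
    unfold FF; ring
  rw [hr]
  refine coeff_X_pow_factor_zero ?_ _ _
  have h1 : n + 1 ≤ (n + 1) * (n + 1) := Nat.le_mul_of_pos_left _ (by omega)
  have h2 : i ≤ (n + 2) * i := Nat.le_mul_of_pos_left i (by omega)
  omega

lemma Lterm_eq (n : ℕ) :
    zz ^ (n + 1) * X ^ ((n + 1) ^ 2) * Pinf (n + 2) * Ring.inverse (Pq n)
      * Ring.inverse (1 + X ^ (n + 1)) = seriesSum (FF n) := by
  have he : Pinf (n + 2) = seriesSum (Ee (n + 2)) := euler (n + 1)
  rw [he]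
  have hdec : ∀ i N : ℕ, N < i → coeff N (Ee (n + 2) i) = 0 := fun i N h =>
    coeff_Ee_zero' (j := n + 1) h
  calc zz ^ (n + 1) * X ^ ((n + 1) ^ 2) * seriesSum (Ee (n + 2)) * Ring.inverse (Pq n)
        * Ring.inverse (1 + X ^ (n + 1))
      = (zz ^ (n + 1) * X ^ ((n + 1) ^ 2) * Ring.inverse (Pq n)
          * Ring.inverse (1 + X ^ (n + 1))) * seriesSum (Ee (n + 2)) := by ring
    _ = seriesSum (fun i => (zz ^ (n + 1) * X ^ ((n + 1) ^ 2) * Ring.inverse (Pq n)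
          * Ring.inverse (1 + X ^ (n + 1))) * Ee (n + 2) i) := mul_seriesSum _ _ hdec
    _ = seriesSum (FF n) := seriesSum_congr fun i => by unfold FF Ee; ring

lemma neg_one_sub (M n : ℕ) (h : n ≤ M) : ((-1 : PSQ)) ^ (M - n) = (-1) ^ M * (-1) ^ n := by
  calc ((-1 : PSQ)) ^ (M - n) = (-1) ^ (M - n) * (((-1) ^ 2) ^ n : PSQ) := by norm_num
    _ = (-1) ^ (M - n) * (-1 : PSQ) ^ (2 * n) := by rw [pow_mul]
    _ = (-1 : PSQ) ^ (M - n + 2 * n) := by rw [pow_add]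
    _ = (-1 : PSQ) ^ (M + n) := by rw [show M - n + 2 * n = M + n by omega]
    _ = (-1) ^ M * (-1) ^ n := by rw [pow_add]

lemma diag_eq (M : ℕ) : ∑ n ∈ Finset.range (M + 1), FF n (M - n)
    = (-1) ^ M * zz ^ (M + 1) * X ^ T (M + 2) * Ring.inverse (Mq (M + 1)) := by
  have hterm : ∀ n ∈ Finset.range (M + 1),
      FF n (M - n) = (-1) ^ M * zz ^ (M + 1) * X ^ T (M + 2) * vv n (M - n) := by
    intro n hn
    have hnM : n ≤ M := by simp only [Finset.mem_range] at hn; omega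
    have hz : n + 1 + (M - n) = M + 1 := by omega
    have hx : (n + 1) * (n + 1) + (n + 2) * (M - n) + T (M - n) = T (M + 2) + T (n + 1) := by
      have := exp_key n (M - n)
      have he : n + (M - n) + 2 = M + 2 := by omega
      rw [he] at this
      exact this
    unfold FF vv
    rw [hz, hx, neg_one_sub M n hnM, pow_add]
    ring
  rw [Finset.sum_congr rfl hterm, ← Finset.mul_sum, clubs M]

end Stmt2Aux

open Stmt2Aux

/-- Identity (2.2). -/
theorem stmt2 :
    seriesSum (fun m =>
      zz ^ (m + 1) * (X : PowerSeries (Polynomial ℚ)) ^ ((m + 1) ^ 2)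
        * seriesProd (fun k => 1 - zz * X ^ (m + 1 + 1 + k))
        * Ring.inverse (∏ k ∈ Finset.range (m + 1 - 1), (1 - (X : PowerSeries (Polynomial ℚ)) ^ (k + 1)))
        * Ring.inverse (1 + (X : PowerSeries (Polynomial ℚ)) ^ (m + 1))) =
    seriesSum (fun m =>
      (-1 : PowerSeries (Polynomial ℚ)) ^ (m + 1 - 1) * zz ^ (m + 1)
        * X ^ ((m + 1) * (m + 1 + 1) / 2)
        * Ring.inverse (∏ j ∈ Finset.range (m + 1), (1 + (X : PowerSeries (Polynomial ℚ)) ^ (j + 1)))) := by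
  have hL : ∀ m : ℕ,
      zz ^ (m + 1) * (X : PowerSeries (Polynomial ℚ)) ^ ((m + 1) ^ 2)
        * seriesProd (fun k => 1 - zz * X ^ (m + 1 + 1 + k))
        * Ring.inverse (∏ k ∈ Finset.range (m + 1 - 1), (1 - (X : PowerSeries (Polynomial ℚ)) ^ (k + 1)))
        * Ring.inverse (1 + (X : PowerSeries (Polynomial ℚ)) ^ (m + 1))
      = seriesSum (FF m) := by
    intro m
    have h0 : zz ^ (m + 1) * (X : PowerSeries (Polynomial ℚ)) ^ ((m + 1) ^ 2)
        * seriesProd (fun k => 1 - zz * X ^ (m + 1 + 1 + k))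
        * Ring.inverse (∏ k ∈ Finset.range (m + 1 - 1), (1 - (X : PowerSeries (Polynomial ℚ)) ^ (k + 1)))
        * Ring.inverse (1 + (X : PowerSeries (Polynomial ℚ)) ^ (m + 1))
        = zz ^ (m + 1) * X ^ ((m + 1) ^ 2) * Pinf (m + 2) * Ring.inverse (Pq m)
          * Ring.inverse (1 + X ^ (m + 1)) := rfl
    rw [h0, Lterm_eq m]
  have hR : ∀ M : ℕ,
      (-1 : PowerSeries (Polynomial ℚ)) ^ (M + 1 - 1) * zz ^ (M + 1)
        * X ^ ((M + 1) * (M + 1 + 1) / 2)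
        * Ring.inverse (∏ j ∈ Finset.range (M + 1), (1 + (X : PowerSeries (Polynomial ℚ)) ^ (j + 1)))
      = (-1) ^ M * zz ^ (M + 1) * X ^ T (M + 2) * Ring.inverse (Mq (M + 1)) := by
    intro M
    have h0 : (-1 : PowerSeries (Polynomial ℚ)) ^ (M + 1 - 1) * zz ^ (M + 1)
        * X ^ ((M + 1) * (M + 1 + 1) / 2)
        * Ring.inverse (∏ j ∈ Finset.range (M + 1), (1 + (X : PowerSeries (Polynomial ℚ)) ^ (j + 1)))
        = (-1) ^ M * zz ^ (M + 1) * X ^ ((M + 1) * (M + 1 + 1) / 2)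
          * Ring.inverse (Mq (M + 1)) := rfl
    rw [h0, T_eq M]
  calc seriesSum (fun m =>
      zz ^ (m + 1) * (X : PowerSeries (Polynomial ℚ)) ^ ((m + 1) ^ 2)
        * seriesProd (fun k => 1 - zz * X ^ (m + 1 + 1 + k))
        * Ring.inverse (∏ k ∈ Finset.range (m + 1 - 1), (1 - (X : PowerSeries (Polynomial ℚ)) ^ (k + 1)))
        * Ring.inverse (1 + (X : PowerSeries (Polynomial ℚ)) ^ (m + 1)))
      = seriesSum (fun m => seriesSum (FF m)) := seriesSum_congr hL
    _ = seriesSum (fun M => ∑ n ∈ Finset.range (M + 1), FF n (M - n)) :=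
        seriesSum_swap FF FF_decay
    _ = _ := seriesSum_congr fun M => (diag_eq M).trans (hR M).symm
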